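/- Let d ≥ 1 and r ≥ 3 be integers, let V ⊂ ℝ^N be a finite set with |V| ≥ (r-1)(d+1)+1, and let P = conv V. Assume P is (d+1)-neighborly with vertex set V: for every nonempty S ⊆ V with |S| ≤ d+1, the set conv S is a face of P. Then for every affine map f : ℝ^N → ℝ^d there exist r pairwise disjoint faces F_1, …, F_r of P whose images f(F_1), …, f(F_r) have a common point; moreover one may take F_j = conv S_j for pairwise disjoint nonempty subsets S_1, …, S_r ⊆ V each of size at most d+1. -/

import Mathlib

open Finset Module Metric

variable {E : Type} [NormedAddCommGroup E] [InnerProductSpace ℝ E] [FiniteDimensional ℝ E]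

/-- extract index-weights from convex hull of range membership -/
lemma exists_convex_weights {ι : Type} [Fintype ι] {x : ι → E} {p : E}
    (hp : p ∈ convexHull ℝ (Set.range x)) :
    ∃ w : ι → ℝ, (∀ i, 0 ≤ w i) ∧ ∑ i, w i = 1 ∧ ∑ i, w i • x i = p := by
  classical
  rw [convexHull_range_eq_exists_affineCombination] at hp
  obtain ⟨s, w, h0, h1, hx⟩ := hp
  refine ⟨fun i => if i ∈ s then w i else 0, fun i => ?_, ?_, ?_⟩
  · by_cases h : i ∈ s <;> simp [h, h0 i]
  · rw [Finset.sum_ite_mem, Finset.univ_inter, h1]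
  · rw [← hx, Finset.affineCombination_eq_linear_combination s x w h1]
    simp only [ite_smul, zero_smul]
    rw [Finset.sum_ite_mem, Finset.univ_inter]

set_option maxHeartbeats 1000000 in
lemma colorful_caratheodory {ι : Type} [Fintype ι]
    (hι : Fintype.card ι = finrank ℝ E + 1)
    (C : ι → Finset E) (h0 : ∀ i, (0:E) ∈ convexHull ℝ (C i : Set E)) :
    ∃ x : ι → E, (∀ i, x i ∈ C i) ∧ (0:E) ∈ convexHull ℝ (Set.range x) := by
  classical
  have hCne : ∀ i, (C i).Nonempty := fun i => by
    have := convexHull_nonempty_iff.mp ⟨0, h0 i⟩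
    exact_mod_cast Finset.coe_nonempty.mp this
  have hιne : Nonempty ι := Fintype.card_pos_iff.mp (by omega)
  let τ := ∀ i, {y // y ∈ C i}
  have : Nonempty τ := ⟨fun i => ⟨(hCne i).choose, (hCne i).choose_spec⟩⟩
  obtain ⟨x₀, hx₀min⟩ := Finite.exists_min
    (fun x : τ => infDist 0 (convexHull ℝ (Set.range (fun i => (x i : E)))))
  set X : ι → E := fun i => (x₀ i : E) with hX
  set K := convexHull ℝ (Set.range X) with hK
  have hKcomp : IsCompact K := (Set.finite_range X).isCompact_convexHull ℝ
  have hKconv : Convex ℝ K := convex_convexHull ℝ _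
  have hKne : K.Nonempty := by
    rw [hK, convexHull_nonempty_iff]; exact Set.range_nonempty X
  obtain ⟨z, hzK, hzdist⟩ := hKcomp.exists_infDist_eq_dist hKne 0
  by_cases hz0 : z = 0
  · exact ⟨X, fun i => (x₀ i).2, hz0 ▸ hzK⟩
  exfalso
  have hznorm : infDist 0 K = ‖z‖ := by rw [hzdist, dist_zero_left]
  have hzpos : (0:ℝ) < ‖z‖ := norm_pos_iff.mpr hz0
  -- variational inequality
  have hvar : ∀ w ∈ K, ‖z‖ ^ 2 ≤ inner ℝ z w := by
    intro w hw
    by_contra hlt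
    push_neg at hlt
    set δ : ℝ := ‖z‖ ^ 2 - inner ℝ z w with hδ
    have hδpos : 0 < δ := by
      have : (inner ℝ z w : ℝ) < ‖z‖^2 := hlt
      simp [hδ]; linarith
    set t : ℝ := min 1 (δ / (‖w - z‖ ^ 2 + 1)) with ht
    have hwz : (0:ℝ) ≤ ‖w - z‖ ^ 2 := by positivity
    have htpos : 0 < t := by
      apply lt_min one_pos
      positivity
    have ht1 : t ≤ 1 := min_le_left _ _
    have hmem : z + t • (w - z) ∈ K := by
      have := hKconv hzK hw (by linarith : (0:ℝ) ≤ 1 - t) htpos.le (by ring)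
      convert this using 1
      module
    have hnorm : ‖z + t • (w - z)‖ ^ 2 = ‖z‖ ^ 2 + 2 * t * (inner ℝ z (w - z)) + t ^ 2 * ‖w - z‖ ^ 2 := by
      rw [norm_add_sq_real, norm_smul, real_inner_smul_right]
      simp [mul_pow]
      ring
    have hip : (inner ℝ z (w - z) : ℝ) = -δ := by
      rw [inner_sub_right, real_inner_self_eq_norm_sq, hδ]; ring
    have hkey : ‖z + t • (w - z)‖ ^ 2 < ‖z‖ ^ 2 := by
      rw [hnorm, hip]
      have h2 : t * (‖w - z‖ ^ 2 + 1) ≤ δ := by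
        calc t * (‖w - z‖ ^ 2 + 1) ≤ (δ / (‖w - z‖ ^ 2 + 1)) * (‖w - z‖ ^ 2 + 1) := by
              apply mul_le_mul_of_nonneg_right (min_le_right _ _); positivity
          _ = δ := by field_simp
      nlinarith
    have : infDist 0 K ≤ ‖z + t • (w - z)‖ := by
      rw [← dist_zero_left]; exact infDist_le_dist_of_mem hmem
    have : ‖z + t • (w - z)‖ < ‖z‖ := by
      have := hkey
      nlinarith [norm_nonneg (z + t • (w - z))]
    linarith [hznorm ▸ ‹infDist 0 K ≤ ‖z + t • (w - z)‖›]
  -- weights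
  obtain ⟨w, hw0, hw1, hwz⟩ := exists_convex_weights hzK
  have hactive : ∀ i, w i ≠ 0 → (inner ℝ z (X i) : ℝ) = ‖z‖ ^ 2 := by
    intro i hi
    have hsum : ∑ i, w i * ((inner ℝ z (X i) : ℝ) - ‖z‖ ^ 2) = 0 := by
      have : (inner ℝ z z : ℝ) = ∑ i, w i * inner ℝ z (X i) := by
        rw [← hwz, inner_sum]; simp [real_inner_smul_right]
      rw [real_inner_self_eq_norm_sq] at this
      have hs : ∑ i, w i * ‖z‖^2 = ‖z‖^2 := by rw [← Finset.sum_mul, hw1, one_mul]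
      simp only [mul_sub]
      rw [Finset.sum_sub_distrib, hs, ← this]
      ring
    have hterm : ∀ i ∈ Finset.univ, 0 ≤ w i * ((inner ℝ z (X i) : ℝ) - ‖z‖ ^ 2) := fun i _ =>
      mul_nonneg (hw0 i) (by linarith [hvar (X i) (subset_convexHull ℝ _ ⟨i, rfl⟩)])
    have := (Finset.sum_eq_zero_iff_of_nonneg hterm).mp hsum i (Finset.mem_univ i)
    rcases mul_eq_zero.mp this with h | h
    · exact absurd h hi
    · linarith [hvar (X i) (subset_convexHull ℝ _ ⟨i, rfl⟩)]
  
  -- z lies in convex hull of active points, all in the hyperplane H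
  set m := finrank ℝ E with hm
  set H : Set E := {y | (inner ℝ z y : ℝ) = ‖z‖ ^ 2} with hH
  have hzH : z ∈ convexHull ℝ (Set.range X ∩ H) := by
    set s := Finset.univ.filter (fun i => w i ≠ 0) with hs
    have hsum1 : ∑ i ∈ s, w i = 1 := by
      rw [hs, Finset.sum_filter_ne_zero, hw1]
    have hsmul : ∑ i ∈ s, w i • X i = z := by
      rw [← hwz]
      apply Finset.sum_subset (Finset.subset_univ s)
      intro i _ hi
      rw [hs, Finset.mem_filter] at hi
      push_neg at hi
      rw [hi (Finset.mem_univ i), zero_smul]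
    have := Finset.centerMass_mem_convexHull (s := Set.range X ∩ H) (t := s) (w := w) (z := X)
      (fun i hi => hw0 i) (by rw [hsum1]; norm_num)
      (fun i hi => Set.mem_inter (Set.mem_range_self i) (hactive i (Finset.mem_filter.mp hi).2))
    rwa [Finset.centerMass_eq_of_sum_1 _ _ hsum1, hsmul] at this
  rw [convexHull_eq_union] at hzH
  simp only [Set.mem_iUnion] at hzH
  obtain ⟨T, hTsub, hTai, hzT⟩ := hzH
  -- the hyperplane has dimension m - 1, so T has at most m points
  have hm1 : 1 ≤ m := by
    have : Nontrivial E := nontrivial_of_ne z 0 hz0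
    exact hm ▸ Module.finrank_pos
  set φ : E →ₗ[ℝ] ℝ := (innerSL ℝ z).toLinearMap with hφ
  have hφapp : ∀ v, φ v = (inner ℝ z v : ℝ) := fun v => rfl
  have hrange : LinearMap.range φ = ⊤ := by
    rw [LinearMap.range_eq_top]
    intro c
    refine ⟨(c / ‖z‖ ^ 2) • z, ?_⟩
    rw [hφapp, real_inner_smul_right, real_inner_self_eq_norm_sq]
    field_simp
  have hker : finrank ℝ (LinearMap.ker φ) + 1 = m := by
    have h1 := LinearMap.finrank_range_add_finrank_ker φ
    rw [hrange] at h1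
    rw [finrank_top, Module.finrank_self] at h1
    omega
  have hTcard : T.card ≤ m := by
    have hvs : vectorSpan ℝ (T : Set E) ≤ LinearMap.ker φ := by
      rw [vectorSpan_def, Submodule.span_le]
      rintro u ⟨a, ha, b, hb, rfl⟩
      have ha' : (inner ℝ z a : ℝ) = ‖z‖ ^ 2 := (hTsub ha).2
      have hb' : (inner ℝ z b : ℝ) = ‖z‖ ^ 2 := (hTsub hb).2
      simp only [SetLike.mem_coe, LinearMap.mem_ker, vsub_eq_sub]
      rw [hφapp, inner_sub_right, ha', hb', sub_self]
    have h1 := hTai.card_le_finrank_succ (k := ℝ)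
    rw [Fintype.card_coe] at h1
    have h2 : finrank ℝ (vectorSpan ℝ (Set.range ((↑) : T → E))) ≤ finrank ℝ (LinearMap.ker φ) := by
      apply Submodule.finrank_mono
      rwa [Subtype.range_coe]
    omega
  -- pick representatives; some colour class i₀ is unused
  have hsec : ∀ y ∈ T, ∃ i, X i = y := fun y hy => (hTsub hy).1
  choose σ hσ using hsec
  set Used : Finset ι := T.attach.image (fun y => σ y.1 y.2) with hUsed
  have hUsedcard : Used.card ≤ m := le_trans (Finset.card_image_le.trans (by
    rw [Finset.card_attach])) hTcard
  have hex : ∃ i₀, i₀ ∉ Used := by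
    by_contra h
    push_neg at h
    have : (Finset.univ : Finset ι) ⊆ Used := fun i _ => h i
    have := Finset.card_le_card this
    rw [Finset.card_univ, hι] at this
    omega
  obtain ⟨i₀, hi₀⟩ := hex
  -- a point of C i₀ on the non-positive side
  have hy₀ : ∃ y ∈ C i₀, (inner ℝ z y : ℝ) ≤ 0 := by
    by_contra h
    push_neg at h
    have hconv : convexHull ℝ (C i₀ : Set E) ⊆ {v | (0:ℝ) < inner ℝ z v} := by
      apply convexHull_min
      · intro y hy; exact h y hy
      · exact convex_halfSpace_gt ⟨fun a b => inner_add_right z a b,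
          fun c a => real_inner_smul_right z a c⟩ 0
    have := hconv (h0 i₀)
    simp at this
  obtain ⟨y₀, hy₀C, hy₀z⟩ := hy₀
  -- swap in y₀ for class i₀ to get a strictly better transversal
  set x₁ : τ := Function.update x₀ i₀ ⟨y₀, hy₀C⟩ with hx₁
  set X₁ : ι → E := fun i => (x₁ i : E) with hX₁
  have hX₁i₀ : X₁ i₀ = y₀ := by simp [hX₁, hx₁]
  have hX₁ne : ∀ i, i ≠ i₀ → X₁ i = X i := by
    intro i hi; simp [hX₁, hx₁, Function.update_of_ne hi, hX]
  have hzsub : z ∈ convexHull ℝ (Set.range X₁) := by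
    have hTr : (T : Set E) ⊆ Set.range X₁ := by
      intro y hy
      have hmem : σ y hy ∈ Used := Finset.mem_image.mpr ⟨⟨y, hy⟩, Finset.mem_attach _ _, rfl⟩
      have hne : σ y hy ≠ i₀ := fun h => hi₀ (h ▸ hmem)
      exact ⟨σ y hy, (hX₁ne _ hne).trans (hσ y hy)⟩
    exact convexHull_mono hTr hzT
  have hy₀mem : y₀ ∈ convexHull ℝ (Set.range X₁) :=
    subset_convexHull ℝ _ ⟨i₀, hX₁i₀⟩
  set a : ℝ := ‖z‖ ^ 2 with ha
  set b : ℝ := ‖y₀‖ ^ 2 with hb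
  set t : ℝ := a / (a + b + 1) with htdef
  have hapos : 0 < a := by positivity
  have hbpos : 0 ≤ b := by positivity
  have htpos : 0 < t := by positivity
  have ht1 : t < 1 := by
    rw [htdef, div_lt_one (by positivity)]; linarith
  set z' : E := (1 - t) • z + t • y₀ with hz'
  have hz'mem : z' ∈ convexHull ℝ (Set.range X₁) :=
    (convex_convexHull ℝ _) hzsub hy₀mem (by linarith) htpos.le (by ring)
  have hz'norm : ‖z'‖ ^ 2 = (1-t)^2 * a + 2 * t * (1-t) * (inner ℝ z y₀ : ℝ) + t^2 * b := by
    rw [hz', norm_add_sq_real, norm_smul, norm_smul, real_inner_smul_left,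
      real_inner_smul_right]
    rw [Real.norm_eq_abs, Real.norm_eq_abs, abs_of_nonneg (by linarith : (0:ℝ) ≤ 1 - t),
      abs_of_nonneg htpos.le]
    rw [mul_pow, mul_pow, ha, hb]
    ring
  have hlt : ‖z'‖ ^ 2 < a := by
    rw [hz'norm]
    have hteq : t * (a + b + 1) = a := by
      rw [htdef]; field_simp
    have hc : (inner ℝ z y₀ : ℝ) ≤ 0 := hy₀z
    have h3 : 2 * t * (1 - t) * (inner ℝ z y₀ : ℝ) ≤ 0 := by
      apply mul_nonpos_of_nonneg_of_nonpos _ hc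
      have : (0:ℝ) ≤ 1 - t := by linarith
      positivity
    have key : (1-t)^2*a + t^2*b = a - t*(a+t) := by linear_combination t * hteq
    have h4 : 0 < t * (a + t) := by positivity
    linarith
  have hz'lt : ‖z'‖ < ‖z‖ := by
    have := hlt
    rw [ha] at this
    nlinarith [norm_nonneg z', norm_nonneg z]
  have hle := hx₀min x₁
  have h1 : infDist 0 (convexHull ℝ (Set.range X₁)) ≤ ‖z'‖ := by
    rw [← dist_zero_left]; exact infDist_le_dist_of_mem hz'mem
  rw [← hznorm] at hz'lt
  have h2 : infDist 0 K ≤ infDist 0 (convexHull ℝ (Set.range X₁)) := by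
    rw [hK, hX, hX₁]; exact hle
  linarith


noncomputable def sark (q : ℕ) (j : Fin (q+1)) (t : Fin q) : ℝ :=
  (if (j:ℕ) = (t:ℕ) then 1 else 0) - (if (j:ℕ) = q then 1 else 0)

lemma sark_cond1 (q : ℕ) (t : Fin q) (j : Fin (q+1)) : ((j:ℕ) = (t:ℕ)) ↔ (j = t.castSucc) := by
  rw [Fin.ext_iff, Fin.coe_castSucc]

lemma sark_cond2 (q : ℕ) (j : Fin (q+1)) : ((j:ℕ) = q) ↔ (j = Fin.last q) := by
  rw [Fin.ext_iff, Fin.val_last]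

lemma sark_sum (q : ℕ) (t : Fin q) : ∑ j : Fin (q+1), sark q j t = 0 := by
  unfold sark
  simp only [sark_cond1 q t, sark_cond2 q]
  rw [Finset.sum_sub_distrib]
  rw [Finset.sum_ite_eq' Finset.univ t.castSucc (fun _ => (1:ℝ)),
      Finset.sum_ite_eq' Finset.univ (Fin.last q) (fun _ => (1:ℝ))]
  simp

lemma sark_combo (q : ℕ) (u : Fin (q+1) → ℝ) (t : Fin q)
    : ∑ j : Fin (q+1), u j * sark q j t = u t.castSucc - u (Fin.last q) := by
  unfold sark
  simp only [sark_cond1 q t, sark_cond2 q, mul_sub, mul_ite, mul_one, mul_zero]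
  rw [Finset.sum_sub_distrib]
  rw [Finset.sum_ite_eq' Finset.univ t.castSucc u, Finset.sum_ite_eq' Finset.univ (Fin.last q) u]
  simp


set_option maxHeartbeats 2000000 in
/-- Tverberg's theorem for `(d+1)`-neighborly polytopes: if `r ≥ 3`, `|V| ≥ (r-1)(d+1)+1`
and `P = conv V` is `(d+1)`-neighborly with vertex set `V` (the convex hull of every
nonempty subset of `V` of size at most `d+1` is a face of `P`), then for every affine map
`f : ℝ^N → ℝ^d` there are `r` pairwise disjoint faces of `P` of the form `conv S_j`,
`S_j ⊆ V` nonempty of size at most `d+1`, whose images under `f` intersect. -/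
theorem tverberg_neighborly (d r N : ℕ) (hd : 1 ≤ d) (hr : 3 ≤ r)
    (V : Finset (EuclideanSpace ℝ (Fin N)))
    (hcard : (r - 1) * (d + 1) + 1 ≤ V.card)
    (hneigh : ∀ S : Finset (EuclideanSpace ℝ (Fin N)), S ⊆ V → S.Nonempty → S.card ≤ d + 1 →
      IsExposed ℝ (convexHull ℝ (V : Set (EuclideanSpace ℝ (Fin N))))
        (convexHull ℝ (S : Set (EuclideanSpace ℝ (Fin N)))))
    (f : EuclideanSpace ℝ (Fin N) →ᵃ[ℝ] EuclideanSpace ℝ (Fin d)) :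
    ∃ S : Fin r → Finset (EuclideanSpace ℝ (Fin N)),
      (∀ j, S j ⊆ V) ∧
      (∀ j, (S j).Nonempty) ∧
      (∀ j, (S j).card ≤ d + 1) ∧
      Pairwise (Function.onFun Disjoint S) ∧
      (∀ j, IsExposed ℝ (convexHull ℝ (V : Set (EuclideanSpace ℝ (Fin N))))
        (convexHull ℝ (S j : Set (EuclideanSpace ℝ (Fin N))))) ∧
      (⋂ j, f '' convexHull ℝ (S j : Set (EuclideanSpace ℝ (Fin N)))).Nonempty := by
  classical
  obtain ⟨q, rfl⟩ : ∃ q, r = q + 1 := ⟨r - 1, by omega⟩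
  have hq : 1 ≤ q := by omega
  have hcard' : (d + 1) * q + 1 ≤ V.card := by
    have h1 : q + 1 - 1 = q := by omega
    rw [h1] at hcard
    calc (d+1) * q + 1 = q * (d+1) + 1 := by ring
      _ ≤ V.card := hcard
  obtain ⟨V₀, hV₀V, hV₀card⟩ := Finset.exists_subset_card_eq hcard'
  set ab : EuclideanSpace ℝ (Fin N) → Fin (d+1) → ℝ :=
    fun v => Fin.snoc (fun s => f v s) 1 with hab
  -- the tensor vectors
  set Tv : {v // v ∈ V₀} → Fin (q+1) → EuclideanSpace ℝ (Fin (d+1) × Fin q) :=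
    fun v j => WithLp.toLp 2 (fun p : Fin (d+1) × Fin q => ab v.1 p.1 * sark q j p.2) with hTv
  set C : {v // v ∈ V₀} → Finset (EuclideanSpace ℝ (Fin (d+1) × Fin q)) :=
    fun v => Finset.image (Tv v) Finset.univ with hC
  have hcardι : Fintype.card {v // v ∈ V₀}
      = finrank ℝ (EuclideanSpace ℝ (Fin (d+1) × Fin q)) + 1 := by
    rw [Fintype.card_coe, hV₀card, finrank_euclideanSpace]
    simp
  have h0 : ∀ v, (0 : EuclideanSpace ℝ (Fin (d+1) × Fin q)) ∈ convexHull ℝ ((C v : Set _)) := by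
    intro v
    apply mem_convexHull_of_exists_fintype (ι := Fin (q+1))
      (fun _ => (1/(q+1) : ℝ)) (Tv v)
    · intro j; positivity
    · rw [Finset.sum_const, Finset.card_univ, Fintype.card_fin, nsmul_eq_mul]
      push_cast
      field_simp
    · intro j; exact Finset.mem_coe.mpr (Finset.mem_image_of_mem _ (Finset.mem_univ j))
    · ext p
      rw [WithLp.ofLp_sum, Finset.sum_apply]
      have : ∀ j : Fin (q+1), ((1/(q+1):ℝ) • Tv v j) p = (1/(q+1):ℝ) * (ab v.1 p.1 * sark q j p.2) := fun j => rfl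
      rw [Finset.sum_congr rfl (fun j _ => this j)]
      have : ∑ j : Fin (q+1), (1/(q+1):ℝ) * (ab v.1 p.1 * sark q j p.2)
          = ((1/(q+1):ℝ) * ab v.1 p.1) * ∑ j : Fin (q+1), sark q j p.2 := by
        rw [Finset.mul_sum]
        exact Finset.sum_congr rfl (fun j _ => by ring)
      rw [this, sark_sum, mul_zero]
      rfl
  obtain ⟨x, hxC, hx0⟩ := colorful_caratheodory hcardι C h0
  have hgex : ∀ v, ∃ j, Tv v j = x v := by
    intro v
    obtain ⟨j, _, hj⟩ := Finset.mem_image.mp (hxC v)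
    exact ⟨j, hj⟩
  choose g hg using hgex
  obtain ⟨wt, hwt0, hwt1, hwtsum⟩ := exists_convex_weights hx0
  -- coordinate equations
  have hcoord : ∀ (s : Fin (d+1)) (t : Fin q),
      ∑ v : {v // v ∈ V₀}, wt v * (ab v.1 s * sark q (g v) t) = 0 := by
    intro s t
    have h : (∑ v : {v // v ∈ V₀}, wt v • x v) (s, t)
        = (0 : EuclideanSpace ℝ (Fin (d+1) × Fin q)) (s, t) := by rw [hwtsum]
    rw [WithLp.ofLp_sum, Finset.sum_apply] at h
    have h2 : ∀ v : {v // v ∈ V₀}, (wt v • x v) (s, t) = wt v * (ab v.1 s * sark q (g v) t) := by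
      intro v
      rw [← hg v]
      rfl
    rw [Finset.sum_congr rfl (fun v _ => h2 v)] at h
    exact h
  set u : Fin (q+1) → Fin (d+1) → ℝ :=
    fun j s => ∑ v ∈ Finset.univ.filter (fun v => g v = j), wt v * ab v.1 s with hu
  have hfib : ∀ (s : Fin (d+1)) (t : Fin q), ∑ j : Fin (q+1), u j s * sark q j t = 0 := by
    intro s t
    calc ∑ j : Fin (q+1), u j s * sark q j t
        = ∑ j : Fin (q+1), ∑ v ∈ Finset.univ.filter (fun v => g v = j),
            wt v * (ab v.1 s * sark q (g v) t) := by
          refine Finset.sum_congr rfl (fun j _ => ?_)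
          rw [hu]
          rw [Finset.sum_mul]
          refine Finset.sum_congr rfl (fun v hv => ?_)
          rw [(Finset.mem_filter.mp hv).2]
          ring
      _ = ∑ v : {v // v ∈ V₀}, wt v * (ab v.1 s * sark q (g v) t) :=
          Finset.sum_fiberwise _ _ _
      _ = 0 := hcoord s t
  have hueq : ∀ (j : Fin (q+1)) (s : Fin (d+1)), u j s = u (Fin.last q) s := by
    intro j s
    induction j using Fin.lastCases with
    | last => rfl
    | cast t =>
      have := hfib s t
      rw [sark_combo q (fun j => u j s) t] at this
      linarith
  -- the common weight of each part is 1/(q+1)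
  have hulast : ∀ j : Fin (q+1), u j (Fin.last d)
      = ∑ v ∈ Finset.univ.filter (fun v => g v = j), wt v := by
    intro j
    rw [hu]
    refine Finset.sum_congr rfl (fun v _ => ?_)
    rw [hab]
    simp [Fin.snoc_last]
  have hmusum : ∑ j : Fin (q+1), u j (Fin.last d) = 1 := by
    rw [Finset.sum_congr rfl (fun j _ => hulast j)]
    rw [Finset.sum_fiberwise]
    exact hwt1
  have hmu : ∀ j : Fin (q+1), u j (Fin.last d) = 1/(q+1) := by
    have hsum : ∑ j : Fin (q+1), u j (Fin.last d)
        = (q+1 : ℝ) * u (Fin.last q) (Fin.last d) := by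
      rw [Finset.sum_congr rfl (fun j _ => hueq j (Fin.last d))]
      rw [Finset.sum_const, Finset.card_univ, Fintype.card_fin, nsmul_eq_mul]
      push_cast
      ring
    intro j
    rw [hueq j]
    rw [hsum] at hmusum
    have hq1 : (q+1:ℝ) ≠ 0 := by positivity
    field_simp
    linarith
  -- fibers are nonempty
  have hq1pos : (0:ℝ) < 1/(q+1) := by positivity
  set S₀ : Fin (q+1) → Finset (EuclideanSpace ℝ (Fin N)) :=
    fun j => (Finset.univ.filter (fun v => g v = j)).image Subtype.val with hS₀
  have hS₀V₀ : ∀ j, S₀ j ⊆ V₀ := by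
    intro j v hv
    obtain ⟨w, _, rfl⟩ := Finset.mem_image.mp hv
    exact w.2
  -- the common point
  set pt : EuclideanSpace ℝ (Fin d) :=
    WithLp.toLp 2 (fun s : Fin d => (q+1 : ℝ) * u (Fin.last q) s.castSucc) with hpt
  have habcast : ∀ (v : EuclideanSpace ℝ (Fin N)) (s : Fin d), ab v s.castSucc = f v s := by
    intro v s
    rw [hab]
    simp [Fin.snoc_castSucc]
  have hkey : ∀ j : Fin (q+1), pt ∈ convexHull ℝ (f '' (S₀ j : Set (EuclideanSpace ℝ (Fin N)))) := by
    intro j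
    set Fib : Finset {v // v ∈ V₀} := Finset.univ.filter (fun v => g v = j) with hFib
    have hwtj : ∑ v ∈ Fib, wt v = 1/(q+1) := by
      rw [← hulast j, hmu j]
    apply mem_convexHull_of_exists_fintype (ι := {v // v ∈ Fib})
      (fun v => (q+1 : ℝ) * wt v.1) (fun v => f v.1.1)
    · intro v
      have := hwt0 v.1
      positivity
    · rw [← Finset.mul_sum, Finset.sum_coe_sort Fib (fun v => wt v), hwtj]
      field_simp
    · intro v
      exact ⟨v.1.1, Finset.mem_coe.mpr (Finset.mem_image.mpr ⟨v.1, v.2, rfl⟩), rfl⟩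
    · ext s
      rw [WithLp.ofLp_sum, Finset.sum_apply]
      have h1 : ∀ v : {v // v ∈ Fib}, (((q+1:ℝ) * wt v.1) • (f v.1.1 : EuclideanSpace ℝ (Fin d))) s
          = (q+1:ℝ) * (wt v.1 * ab v.1.1 s.castSucc) := by
        intro v
        have : (((q+1:ℝ) * wt v.1) • (f v.1.1 : EuclideanSpace ℝ (Fin d))) s
            = ((q+1:ℝ) * wt v.1) * f v.1.1 s := rfl
        rw [this, habcast]
        ring
      rw [Finset.sum_congr rfl (fun v _ => h1 v), ← Finset.mul_sum,
        Finset.sum_coe_sort Fib (fun v => wt v * ab v.1 s.castSucc)]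
      have h2 : ∑ v ∈ Fib, wt v * ab v.1 s.castSucc = u j s.castSucc := by rw [hu]
      rw [h2, hueq j]
  -- shrink each part via Caratheodory
  have hmain : ∀ j : Fin (q+1), ∃ Sj : Finset (EuclideanSpace ℝ (Fin N)),
      Sj ⊆ S₀ j ∧ Sj.Nonempty ∧ Sj.card ≤ d + 1 ∧
      pt ∈ f '' (convexHull ℝ (Sj : Set (EuclideanSpace ℝ (Fin N)))) := by
    intro j
    have h := hkey j
    rw [convexHull_eq_union] at h
    simp only [Set.mem_iUnion] at h
    obtain ⟨T, hTsub, hTai, hpT⟩ := h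
    have hTcard : T.card ≤ d + 1 := by
      have h1 := hTai.card_le_finrank_succ (k := ℝ)
      rw [Fintype.card_coe] at h1
      have h2 : finrank ℝ (vectorSpan ℝ (Set.range ((↑) : T → EuclideanSpace ℝ (Fin d)))) ≤ d := by
        refine le_trans (Submodule.finrank_le _) ?_
        rw [finrank_euclideanSpace]
        simp
      omega
    have hTne : T.Nonempty := by
      rcases T.eq_empty_or_nonempty with h | h
      · rw [h] at hpT
        simp [convexHull_empty] at hpT
      · exact h
    have hsec : ∀ y ∈ T, ∃ v ∈ S₀ j, f v = y := by
      intro y hy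
      obtain ⟨v, hv, rfl⟩ := hTsub hy
      exact ⟨v, hv, rfl⟩
    choose σ hσ1 hσ2 using hsec
    refine ⟨T.attach.image (fun y => σ y.1 y.2), ?_, ?_, ?_, ?_⟩
    · intro v hv
      obtain ⟨y, _, rfl⟩ := Finset.mem_image.mp hv
      exact hσ1 _ _
    · exact (hTne.attach).image _
    · exact le_trans Finset.card_image_le (by rw [Finset.card_attach]; exact hTcard)
    · rw [AffineMap.image_convexHull]
      refine convexHull_mono ?_ hpT
      intro y hy
      exact ⟨σ y hy, Finset.mem_coe.mpr (Finset.mem_image.mpr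
        ⟨⟨y, hy⟩, Finset.mem_attach _ _, rfl⟩), hσ2 y hy⟩
  choose S hS1 hS2 hS3 hS4 using hmain
  have hSV : ∀ j, S j ⊆ V := fun j => le_trans (hS1 j) (le_trans (hS₀V₀ j) hV₀V)
  refine ⟨S, hSV, hS2, hS3, ?_, fun j => hneigh (S j) (hSV j) (hS2 j) (hS3 j),
    ⟨pt, Set.mem_iInter.mpr (fun j => hS4 j)⟩⟩
  intro j j' hne
  rw [Function.onFun, Finset.disjoint_left]
  intro v hv hv'
  obtain ⟨w1, hw1, hw1v⟩ := Finset.mem_image.mp (hS1 j hv)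
  obtain ⟨w2, hw2, hw2v⟩ := Finset.mem_image.mp (hS1 j' hv')
  have : w1 = w2 := Subtype.ext (hw1v.trans hw2v.symm)
  rw [this] at hw1
  exact hne ((Finset.mem_filter.mp hw1).2.symm.trans (Finset.mem_filter.mp hw2).2)
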